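/- Let ℓ, m ≥ 1 and let G be a finite simple graph that contains no complete bipartite subgraph K_{ℓ,m}. Then every strictly increasing chain A_1 ⊂ A_2 ⊂ ⋯ ⊂ A_p of nonempty subsets of V such that CN(A_p) ≠ ∅ and CN²(A_i) = A_i for all 1 ≤ i ≤ p has length p ≤ ℓ + m − 2. (Equivalently: the dimension of the Lovász complex L(G), whose (p−1)-simplices are exactly such chains of length p, is at most ℓ + m − 3.) -/

import Mathlib

/-- The common neighborhood of a set `A` of vertices of a graph `G`:
all vertices adjacent to every element of `A`. Note `commonNbhd G ∅ = Set.univ`. -/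
def commonNbhd {V : Type*} (G : SimpleGraph V) (A : Set V) : Set V :=
  {v | ∀ a ∈ A, G.Adj a v}

/-- `G` contains a complete bipartite subgraph `K_{ℓ,m}`: there are disjoint vertex
sets of sizes `ℓ` and `m` with all edges between them present. -/
def ContainsKB {V : Type*} (G : SimpleGraph V) (ℓ m : ℕ) : Prop :=
  ∃ S T : Set V, Disjoint S T ∧ S.ncard = ℓ ∧ T.ncard = m ∧
    ∀ s ∈ S, ∀ t ∈ T, G.Adj s t

lemma commonNbhd_anti {V : Type*} (G : SimpleGraph V) {A B : Set V} (h : A ⊆ B) :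
    commonNbhd G B ⊆ commonNbhd G A := fun v hv a ha => hv a (h ha)

/-- If `G` contains no `K_{ℓ,m}`, then any strictly increasing chain
`A 0 ⊂ A 1 ⊂ ⋯ ⊂ A (p-1)` of nonempty subsets of `V` with `CN(A (p-1)) ≠ ∅`
and `CN²(A i) = A i` for all `i` has length `p ≤ ℓ + m − 2`; i.e., the dimension
of the Lovász complex `L(G)` is at most `ℓ + m − 3`. -/
theorem lovasz_chain_length_le {V : Type*} [Fintype V] (G : SimpleGraph V)
    (ℓ m : ℕ) (hℓ : 1 ≤ ℓ) (hm : 1 ≤ m) (hG : ¬ ContainsKB G ℓ m)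
    (p : ℕ) (hp : 1 ≤ p) (A : Fin p → Set V)
    (hchain : StrictMono A)
    (hne : ∀ i, (A i).Nonempty)
    (hcn_ne : (commonNbhd G (A ⟨p - 1, by omega⟩)).Nonempty)
    (hfix : ∀ i, commonNbhd G (commonNbhd G (A i)) = A i) :
    p ≤ ℓ + m - 2 := by
  by_contra hlt
  push_neg at hlt
  have hpℓm : ℓ + m - 1 ≤ p := by omega
  -- lower bound on sizes of A i
  have claim1 : ∀ n (h : n < p), n + 1 ≤ (A ⟨n, h⟩).ncard := by
    intro n
    induction n with
    | zero => intro h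
              exact (Set.ncard_pos (Set.toFinite _)).mpr (hne _)
    | succ k ih =>
      intro h
      have hk : k < p := by omega
      have hss : A ⟨k, hk⟩ ⊂ A ⟨k + 1, h⟩ := hchain (by simp [Fin.lt_def])
      have := Set.ncard_lt_ncard hss (Set.toFinite _)
      have := ih hk
      omega
  -- lower bound on sizes of commonNbhd (A (p-1-k))
  have claim2 : ∀ k, k < p → ∀ (h : p - 1 - k < p), k + 1 ≤ (commonNbhd G (A ⟨p - 1 - k, h⟩)).ncard := by
    intro k
    induction k with
    | zero => intro _ h
              exact (Set.ncard_pos (Set.toFinite _)).mpr (by simpa using hcn_ne)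
    | succ k ih =>
      intro hkp h
      have h1 : p - 1 - k < p := by omega
      · 
        have hlt' : (⟨p - 1 - (k + 1), h⟩ : Fin p) < ⟨p - 1 - k, h1⟩ := by
          simp [Fin.lt_def]; omega
        have hss : A ⟨p - 1 - (k + 1), h⟩ ⊂ A ⟨p - 1 - k, h1⟩ := hchain hlt'
        have hsub : commonNbhd G (A ⟨p - 1 - k, h1⟩) ⊆ commonNbhd G (A ⟨p - 1 - (k + 1), h⟩) :=
          commonNbhd_anti G hss.subset
        have hne' : commonNbhd G (A ⟨p - 1 - k, h1⟩) ≠ commonNbhd G (A ⟨p - 1 - (k + 1), h⟩) := by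
          intro heq
          have : A ⟨p - 1 - k, h1⟩ = A ⟨p - 1 - (k + 1), h⟩ := by
            rw [← hfix ⟨p - 1 - k, h1⟩, ← hfix ⟨p - 1 - (k + 1), h⟩, heq]
          exact hss.ne this.symm
        have hss' : commonNbhd G (A ⟨p - 1 - k, h1⟩) ⊂ commonNbhd G (A ⟨p - 1 - (k + 1), h⟩) :=
          ⟨hsub, fun hc => hne' (le_antisymm hsub hc)⟩
        have := Set.ncard_lt_ncard hss' (Set.toFinite _)
        have := ih (by omega) h1
        omega
  -- pick the index ℓ - 1
  have hℓp : ℓ - 1 < p := by omega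
  have hS : ℓ ≤ (A ⟨ℓ - 1, hℓp⟩).ncard := by
    have := claim1 (ℓ - 1) hℓp; omega
  have hidx : p - 1 - (p - ℓ) = ℓ - 1 := by omega
  have hT : m ≤ (commonNbhd G (A ⟨ℓ - 1, hℓp⟩)).ncard := by
    have h2 := claim2 (p - ℓ) (by omega) (by omega)
    have : (⟨p - 1 - (p - ℓ), by omega⟩ : Fin p) = ⟨ℓ - 1, hℓp⟩ := by
      simp [hidx]
    rw [this] at h2
    omega
  obtain ⟨S, hSsub, hScard⟩ := Set.exists_subset_card_eq hS
  obtain ⟨T, hTsub, hTcard⟩ := Set.exists_subset_card_eq hT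
  apply hG
  refine ⟨S, T, ?_, hScard, hTcard, ?_⟩
  · rw [Set.disjoint_left]
    intro v hvS hvT
    exact G.loopless.irrefl v (hTsub hvT v (hSsub hvS))
  · intro s hs t ht
    exact hTsub ht s (hSsub hs)
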